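/- (Proposition 3) If Assumption 1 holds, then the constrained problem of minimizing (1/2) Σ_{(i,j)∈Ω} (Z_{ij} − X_{ij})² over all Z ∈ ℝ^{n×p} satisfying tr(Z^T L_r Z) = 0 and tr(Z L_c Z^T) = 0 has the unique solution Z* = Σ_{r=1}^R Σ_{c=1}^C μ*_{rc} χ_{A_r} χ_{B_c}^T, where Ω_{rc} = {(i,j) ∈ Ω : i ∈ A_r, j ∈ B_c} and μ*_{rc} = |Ω_{rc}|^{-1} Σ_{(i,j)∈Ω_{rc}} X_{ij}. -/

import Mathlib

open Matrix BigOperators Finset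
open scoped Classical

/-- The weighted graph Laplacian: `L i i = ∑ j, w i j` and `L i j = -(w i j)` for `i ≠ j`. -/
noncomputable def lap {n : ℕ} (w : Fin n → Fin n → ℝ) : Matrix (Fin n) (Fin n) ℝ :=
  Matrix.of fun i j => if i = j then (∑ k, w i k) else -(w i j)

/-- The graph on `Fin n` with `i ~ j` iff `i ≠ j` and `w i j > 0` (for symmetric `w`). -/
def graphOf {n : ℕ} (w : Fin n → Fin n → ℝ) : SimpleGraph (Fin n) :=
  SimpleGraph.fromRel (fun i j => 0 < w i j)

/-- The 0/1 indicator vector of a subset. -/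
noncomputable def chi {n : ℕ} (A : Set (Fin n)) : Fin n → ℝ :=
  A.indicator (fun _ => (1 : ℝ))

/-- The squared-error loss over the observed entries: `(1/2) ∑_{(i,j)∈Ω} (Z_{ij} - X_{ij})²`. -/
noncomputable def lossG {n p : ℕ} (Ω : Finset (Fin n × Fin p))
    (X Z : Matrix (Fin n) (Fin p) ℝ) : ℝ :=
  (1 / 2) * ∑ q ∈ Ω, (Z q.1 q.2 - X q.1 q.2) ^ 2

/-- The observed entries inside the bicluster `A_r × B_c`. -/
noncomputable def biclusterObs {n p R C : ℕ} (Ω : Finset (Fin n × Fin p))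
    (A : Fin R → Set (Fin n)) (B : Fin C → Set (Fin p)) (r : Fin R) (c : Fin C) :
    Finset (Fin n × Fin p) :=
  Ω.filter fun q => q.1 ∈ A r ∧ q.2 ∈ B c

/-- `Z* = ∑_{r,c} μ*_{rc} χ_{A_r} χ_{B_c}ᵀ` where `μ*_{rc}` is the average of the observed
entries of `X` over the bicluster `A_r × B_c`. -/
noncomputable def Zstar {n p R C : ℕ} (Ω : Finset (Fin n × Fin p))
    (X : Matrix (Fin n) (Fin p) ℝ)
    (A : Fin R → Set (Fin n)) (B : Fin C → Set (Fin p)) : Matrix (Fin n) (Fin p) ℝ :=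
  Matrix.of fun i j =>
    ∑ r, ∑ c,
      ((∑ q ∈ biclusterObs Ω A B r c, X q.1 q.2) / ((biclusterObs Ω A B r c).card : ℝ))
        * chi (A r) i * chi (B c) j

lemma quad_form {n : ℕ} (w : Fin n → Fin n → ℝ) (hs : ∀ i j, w i j = w j i)
    (hd : ∀ i, w i i = 0) (v : Fin n → ℝ) :
    ∑ i, ∑ j, v i * lap w i j * v j
      = (1/2) * ∑ i, ∑ j, w i j * (v i - v j)^2 := by
  have h1 : ∀ i j : Fin n, v i * lap w i j * v j
      = (if i = j then (∑ m, w i m) * v i ^ 2 else 0) - w i j * (v i * v j) := by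
    intro i j
    by_cases h : i = j
    · subst h; simp [lap, hd i]; ring
    · simp [lap, h]; ring
  have h2 : ∀ i j : Fin n, w i j * (v i - v j)^2
      = w i j * v i ^ 2 + w i j * v j ^ 2 - 2 * (w i j * (v i * v j)) := by
    intro i j; ring
  simp only [h1, h2, Finset.sum_sub_distrib, Finset.sum_add_distrib, Finset.mul_sum]
  have h3 : ∑ i : Fin n, ∑ j : Fin n, (if i = j then (∑ m, w i m) * v i ^ 2 else 0)
      = ∑ i : Fin n, ∑ j : Fin n, w i j * v i ^ 2 := by
    refine Finset.sum_congr rfl fun i _ => ?_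
    rw [Finset.sum_ite_eq (Finset.univ) i (fun _ => (∑ m, w i m) * v i ^ 2), Finset.sum_mul]
    simp
  have h4 : ∑ i : Fin n, ∑ j : Fin n, w i j * v j ^ 2
      = ∑ i : Fin n, ∑ j : Fin n, w i j * v i ^ 2 := by
    rw [Finset.sum_comm]
    exact Finset.sum_congr rfl fun i _ => Finset.sum_congr rfl fun j _ => by rw [hs]
  rw [h3, h4]
  have h5 : ∑ x : Fin n, ∑ y : Fin n, 2 * (w x y * (v x * v y))
      = 2 * ∑ x : Fin n, ∑ y : Fin n, w x y * (v x * v y) := by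
    simp only [Finset.mul_sum]
  rw [h5]
  ring

lemma trace_form {n p : ℕ} (w : Fin n → Fin n → ℝ) (hs : ∀ i j, w i j = w j i)
    (hd : ∀ i, w i i = 0) (Z : Matrix (Fin n) (Fin p) ℝ) :
    (Zᵀ * lap w * Z).trace = (1/2) * ∑ i, ∑ j, w i j * ∑ k, (Z i k - Z j k)^2 := by
  have step : (Zᵀ * lap w * Z).trace = ∑ k, ∑ i, ∑ j, Z i k * lap w i j * Z j k := by
    simp only [Matrix.trace, Matrix.diag, Matrix.mul_apply, Matrix.transpose_apply,
      Finset.sum_mul, Finset.mul_sum]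
    refine Finset.sum_congr rfl fun k _ => ?_
    rw [Finset.sum_comm]
  rw [step]
  have : ∀ k, ∑ i, ∑ j, Z i k * lap w i j * Z j k
      = (1/2) * ∑ i, ∑ j, w i j * (Z i k - Z j k)^2 :=
    fun k => quad_form w hs hd (fun i => Z i k)
  simp only [this]
  rw [← Finset.mul_sum]
  congr 1
  rw [Finset.sum_comm]
  refine Finset.sum_congr rfl fun i _ => ?_
  rw [Finset.sum_comm]
  exact Finset.sum_congr rfl fun j _ => (Finset.mul_sum _ _ _).symm

lemma trace_zero_iff {n p : ℕ} (w : Fin n → Fin n → ℝ) (hs : ∀ i j, w i j = w j i)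
    (hnn : ∀ i j, 0 ≤ w i j) (hd : ∀ i, w i i = 0) (Z : Matrix (Fin n) (Fin p) ℝ) :
    (Zᵀ * lap w * Z).trace = 0 ↔ ∀ i j, 0 < w i j → ∀ k, Z i k = Z j k := by
  rw [trace_form w hs hd Z]
  have hterm : ∀ i j : Fin n, 0 ≤ w i j * ∑ k, (Z i k - Z j k)^2 := fun i j =>
    mul_nonneg (hnn i j) (Finset.sum_nonneg fun k _ => sq_nonneg _)
  constructor
  · intro h i j hw k
    have h0 : ∑ i : Fin n, ∑ j : Fin n, w i j * ∑ k, (Z i k - Z j k)^2 = 0 := by linarith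
    have h1 := (Finset.sum_eq_zero_iff_of_nonneg
      (fun i _ => Finset.sum_nonneg fun j _ => hterm i j)).mp h0 i (Finset.mem_univ i)
    have h2 := (Finset.sum_eq_zero_iff_of_nonneg (fun j _ => hterm i j)).mp h1 j (Finset.mem_univ j)
    have h3 : ∑ k, (Z i k - Z j k)^2 = 0 := by
      rcases mul_eq_zero.mp h2 with h | h
      · exact absurd h (ne_of_gt hw)
      · exact h
    have h4 := (Finset.sum_eq_zero_iff_of_nonneg (fun k _ => sq_nonneg _)).mp h3 k
      (Finset.mem_univ k)
    have := pow_eq_zero_iff (n := 2) (by norm_num) |>.mp h4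
    linarith [this]
  · intro h
    have : ∑ i : Fin n, ∑ j : Fin n, w i j * ∑ k, (Z i k - Z j k)^2 = 0 := by
      refine Finset.sum_eq_zero fun i _ => Finset.sum_eq_zero fun j _ => ?_
      rcases lt_or_eq_of_le (hnn i j) with hw | hw
      · have : ∑ k, (Z i k - Z j k)^2 = 0 :=
          Finset.sum_eq_zero fun k _ => by rw [h i j hw k]; ring
        rw [this, mul_zero]
      · rw [← hw, zero_mul]
    rw [this, mul_zero]

lemma const_on_comp {n : ℕ} {w : Fin n → Fin n → ℝ} (hs : ∀ i j, w i j = w j i)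
    {g : Fin n → ℝ} (h : ∀ i j, 0 < w i j → g i = g j) :
    ∀ {i j : Fin n}, (graphOf w).Reachable i j → g i = g j := by
  intro i j hr
  obtain ⟨wk⟩ := hr
  induction wk with
  | nil => rfl
  | @cons a b c hadj _ ih =>
    have hab : g a = g b := by
      rw [graphOf, SimpleGraph.fromRel_adj] at hadj
      rcases hadj.2 with h1 | h1
      · exact h _ _ h1
      · exact (h _ _ h1).symm
    rw [hab]; exact ih

lemma cell_id {α : Type*} (S : Finset α) (X : α → ℝ) (μ : ℝ) (hS : S.Nonempty) :
    ∑ q ∈ S, (μ - X q)^2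
      = (∑ q ∈ S, ((∑ r ∈ S, X r)/(S.card : ℝ) - X q)^2)
        + (S.card : ℝ) * (μ - (∑ r ∈ S, X r)/(S.card : ℝ))^2 := by
  set m := (∑ r ∈ S, X r)/(S.card : ℝ) with hm
  have hc : (S.card : ℝ) ≠ 0 := Nat.cast_ne_zero.mpr (Finset.card_ne_zero_of_mem hS.choose_spec)
  have hzero : ∑ q ∈ S, (m - X q) = 0 := by
    rw [Finset.sum_sub_distrib, Finset.sum_const, nsmul_eq_mul, hm]
    field_simp
    ring
  have hexp : ∀ q ∈ S, (μ - X q)^2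
      = (m - X q)^2 + ((μ - m)^2 + 2*(μ - m)*(m - X q)) := fun q _ => by ring
  rw [Finset.sum_congr rfl hexp, Finset.sum_add_distrib, Finset.sum_add_distrib,
    Finset.sum_const, ← Finset.mul_sum, hzero, mul_zero, add_zero, nsmul_eq_mul]

/-- Proposition 3: under Assumption 1, the problem of minimizing
`(1/2) ∑_{(i,j)∈Ω} (Z_{ij} - X_{ij})²` subject to `tr(Zᵀ L_r Z) = 0` and
`tr(Z L_c Zᵀ) = 0` has `Z*` as its unique solution. -/
theorem constrained_ls_unique_solution {n p R C : ℕ} (Ω : Finset (Fin n × Fin p))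
    (X : Matrix (Fin n) (Fin p) ℝ)
    (w : Fin n → Fin n → ℝ) (wt : Fin p → Fin p → ℝ)
    (hsymm : ∀ i j, w i j = w j i) (hnonneg : ∀ i j, 0 ≤ w i j)
    (hdiag : ∀ i, w i i = 0)
    (hsymm' : ∀ i j, wt i j = wt j i) (hnonneg' : ∀ i j, 0 ≤ wt i j)
    (hdiag' : ∀ i, wt i i = 0)
    (A : Fin R → Set (Fin n))
    (eA : (graphOf w).ConnectedComponent ≃ Fin R)
    (hA : ∀ r, A r = {v | eA ((graphOf w).connectedComponentMk v) = r})
    (B : Fin C → Set (Fin p))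
    (eB : (graphOf wt).ConnectedComponent ≃ Fin C)
    (hB : ∀ c, B c = {v | eB ((graphOf wt).connectedComponentMk v) = c})
    (hobs : ∀ r c, ∃ q ∈ Ω, q.1 ∈ A r ∧ q.2 ∈ B c) :
    ((Zstar Ω X A B)ᵀ * lap w * Zstar Ω X A B).trace = 0 ∧
    (Zstar Ω X A B * lap wt * (Zstar Ω X A B)ᵀ).trace = 0 ∧
    (∀ Z : Matrix (Fin n) (Fin p) ℝ,
      (Zᵀ * lap w * Z).trace = 0 → (Z * lap wt * Zᵀ).trace = 0 →
        lossG Ω X (Zstar Ω X A B) ≤ lossG Ω X Z) ∧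
    (∀ Z : Matrix (Fin n) (Fin p) ℝ,
      (Zᵀ * lap w * Z).trace = 0 → (Z * lap wt * Zᵀ).trace = 0 →
        lossG Ω X Z ≤ lossG Ω X (Zstar Ω X A B) → Z = Zstar Ω X A B) := by
  classical
  -- abbreviations
  set rOf : Fin n → Fin R := fun i => eA ((graphOf w).connectedComponentMk i) with hrOf
  set cOf : Fin p → Fin C := fun j => eB ((graphOf wt).connectedComponentMk j) with hcOf
  have hmemA : ∀ (r : Fin R) (i : Fin n), i ∈ A r ↔ rOf i = r := by
    intro r i; rw [hA r]; exact Iff.rfl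
  have hmemB : ∀ (c : Fin C) (j : Fin p), j ∈ B c ↔ cOf j = c := by
    intro c j; rw [hB c]; exact Iff.rfl
  set μ : Fin R → Fin C → ℝ := fun r c =>
    (∑ q ∈ biclusterObs Ω A B r c, X q.1 q.2) / ((biclusterObs Ω A B r c).card : ℝ) with hμ
  -- value of Zstar
  have hZs : ∀ i j, Zstar Ω X A B i j = μ (rOf i) (cOf j) := by
    intro i j
    have hterm : ∀ (r : Fin R) (c : Fin C),
        ((∑ q ∈ biclusterObs Ω A B r c, X q.1 q.2) / ((biclusterObs Ω A B r c).card : ℝ))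
          * chi (A r) i * chi (B c) j
        = if r = rOf i then (if c = cOf j then μ r c else 0) else 0 := by
      intro r c
      by_cases hr : r = rOf i
      · by_cases hc : c = cOf j
        · subst hr; subst hc
          have h1 : i ∈ A (rOf i) := (hmemA _ i).mpr rfl
          have h2 : j ∈ B (cOf j) := (hmemB _ j).mpr rfl
          rw [chi, chi, Set.indicator_of_mem h1, Set.indicator_of_mem h2]
          simp [hμ]
        · have h2 : j ∉ B c := fun hmem => hc ((hmemB c j).mp hmem).symm
          simp [chi, Set.indicator_of_notMem h2, hr, hc]
      · have h1 : i ∉ A r := fun hmem => hr ((hmemA r i).mp hmem).symm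
        simp [chi, Set.indicator_of_notMem h1, hr]
    have hrw : Zstar Ω X A B i j
        = ∑ r, ∑ c, (if r = rOf i then (if c = cOf j then μ r c else 0) else 0) := by
      simp only [Zstar, Matrix.of_apply]
      exact Finset.sum_congr rfl (fun r _ => Finset.sum_congr rfl (fun c _ => hterm r c))
    rw [hrw]
    simp
  -- nonemptiness of biclusters
  have hne : ∀ r c, (biclusterObs Ω A B r c).Nonempty := by
    intro r c
    obtain ⟨q, hq, hq1, hq2⟩ := hobs r c
    exact ⟨q, Finset.mem_filter.mpr ⟨hq, hq1, hq2⟩⟩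
  have hcard : ∀ r c, (0:ℝ) < ((biclusterObs Ω A B r c).card : ℝ) := by
    intro r c
    exact_mod_cast Finset.card_pos.mpr (hne r c)
  -- Zstar is feasible
  have hZsconst : ∀ i i' j j', rOf i = rOf i' → cOf j = cOf j' →
      Zstar Ω X A B i j = Zstar Ω X A B i' j' := by
    intro i i' j j' h1 h2; rw [hZs, hZs, h1, h2]
  have hadjR : ∀ i i', 0 < w i i' → rOf i = rOf i' := by
    intro i i' hw
    have hadj : (graphOf w).Adj i i' := by
      rw [graphOf, SimpleGraph.fromRel_adj]
      refine ⟨fun h => ?_, Or.inl hw⟩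
      · subst h; rw [hdiag i] at hw; exact lt_irrefl 0 hw
    simp only [hrOf]
    rw [SimpleGraph.ConnectedComponent.sound hadj.reachable]
  have hadjC : ∀ j j', 0 < wt j j' → cOf j = cOf j' := by
    intro j j' hw
    have hadj : (graphOf wt).Adj j j' := by
      rw [graphOf, SimpleGraph.fromRel_adj]
      refine ⟨fun h => ?_, Or.inl hw⟩
      · subst h; rw [hdiag' j] at hw; exact lt_irrefl 0 hw
    simp only [hcOf]
    rw [SimpleGraph.ConnectedComponent.sound hadj.reachable]
  have t1 : ((Zstar Ω X A B)ᵀ * lap w * Zstar Ω X A B).trace = 0 := by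
    rw [trace_zero_iff w hsymm hnonneg hdiag]
    intro i i' hw k
    exact hZsconst i i' k k (hadjR i i' hw) rfl
  have t2 : (Zstar Ω X A B * lap wt * (Zstar Ω X A B)ᵀ).trace = 0 := by
    have := (trace_zero_iff wt hsymm' hnonneg' hdiag' (Zstar Ω X A B)ᵀ).mpr
      (fun j j' hw i => by
        simp only [Matrix.transpose_apply]
        exact hZsconst i i j j' rfl (hadjC j j' hw))
    rwa [Matrix.transpose_transpose] at this
  -- feasible matrices are constant on biclusters
  have feas : ∀ Z : Matrix (Fin n) (Fin p) ℝ,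
      (Zᵀ * lap w * Z).trace = 0 → (Z * lap wt * Zᵀ).trace = 0 →
      ∀ i i' j j', rOf i = rOf i' → cOf j = cOf j' → Z i j = Z i' j' := by
    intro Z h1 h2 i i' j j' hri hcj
    have hrow := (trace_zero_iff w hsymm hnonneg hdiag Z).mp h1
    have hcol := (trace_zero_iff wt hsymm' hnonneg' hdiag' Zᵀ).mp
      (by rwa [Matrix.transpose_transpose])
    have e1 : Z i j = Z i' j := by
      have hreach : (graphOf w).Reachable i i' :=
        SimpleGraph.ConnectedComponent.exact (eA.injective hri)
      exact const_on_comp hsymm (g := fun x => Z x j) (fun a b hab => hrow a b hab j) hreach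
    have e2 : Z i' j = Z i' j' := by
      have hreach : (graphOf wt).Reachable j j' :=
        SimpleGraph.ConnectedComponent.exact (eB.injective hcj)
      exact const_on_comp hsymm' (g := fun x => Z i' x)
        (fun a b hab => hcol a b hab i') hreach
    rw [e1, e2]
  -- fiberwise sum decomposition
  have hfiber : ∀ (g : Fin n × Fin p → ℝ),
      ∑ q ∈ Ω, g q = ∑ rc : Fin R × Fin C, ∑ q ∈ biclusterObs Ω A B rc.1 rc.2, g q := by
    intro g
    rw [← Finset.sum_fiberwise_of_maps_to (g := fun q => (rOf q.1, cOf q.2))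
      (fun x _ => Finset.mem_univ _) g]
    refine Finset.sum_congr rfl fun rc _ => ?_
    refine Finset.sum_congr ?_ (fun _ _ => rfl)
    ext q
    simp only [Finset.mem_filter, biclusterObs, hmemA, hmemB, Prod.ext_iff]
  -- representative of each bicluster
  set q0 : Fin R × Fin C → Fin n × Fin p := fun rc => (hne rc.1 rc.2).choose with hq0
  have hq0mem : ∀ rc, q0 rc ∈ biclusterObs Ω A B rc.1 rc.2 := fun rc => (hne rc.1 rc.2).choose_spec
  have hq0r : ∀ rc : Fin R × Fin C, rOf (q0 rc).1 = rc.1 := fun rc =>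
    (hmemA _ _).mp (Finset.mem_filter.mp (hq0mem rc)).2.1
  have hq0c : ∀ rc : Fin R × Fin C, cOf (q0 rc).2 = rc.2 := fun rc =>
    (hmemB _ _).mp (Finset.mem_filter.mp (hq0mem rc)).2.2
  -- loss decomposition for feasible Z
  have loss_eq : ∀ Z : Matrix (Fin n) (Fin p) ℝ,
      (∀ i i' j j', rOf i = rOf i' → cOf j = cOf j' → Z i j = Z i' j') →
      lossG Ω X Z = lossG Ω X (Zstar Ω X A B)
        + (1/2) * ∑ rc : Fin R × Fin C, ((biclusterObs Ω A B rc.1 rc.2).card : ℝ)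
            * (Z (q0 rc).1 (q0 rc).2 - μ rc.1 rc.2)^2 := by
    intro Z hZ
    unfold lossG
    rw [hfiber (fun q => (Z q.1 q.2 - X q.1 q.2)^2),
        hfiber (fun q => (Zstar Ω X A B q.1 q.2 - X q.1 q.2)^2)]
    rw [← mul_add, ← Finset.sum_add_distrib]
    congr 1
    refine Finset.sum_congr rfl fun rc _ => ?_
    have hcell1 : ∑ q ∈ biclusterObs Ω A B rc.1 rc.2, (Z q.1 q.2 - X q.1 q.2)^2
        = ∑ q ∈ biclusterObs Ω A B rc.1 rc.2, (Z (q0 rc).1 (q0 rc).2 - X q.1 q.2)^2 := by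
      refine Finset.sum_congr rfl fun q hq => ?_
      obtain ⟨-, hq1, hq2⟩ := Finset.mem_filter.mp hq
      rw [hZ q.1 (q0 rc).1 q.2 (q0 rc).2
        (((hmemA _ _).mp hq1).trans (hq0r rc).symm)
        (((hmemB _ _).mp hq2).trans (hq0c rc).symm)]
    have hcell2 : ∑ q ∈ biclusterObs Ω A B rc.1 rc.2, (Zstar Ω X A B q.1 q.2 - X q.1 q.2)^2
        = ∑ q ∈ biclusterObs Ω A B rc.1 rc.2, (μ rc.1 rc.2 - X q.1 q.2)^2 := by
      refine Finset.sum_congr rfl fun q hq => ?_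
      obtain ⟨-, hq1, hq2⟩ := Finset.mem_filter.mp hq
      rw [hZs, (hmemA _ _).mp hq1, (hmemB _ _).mp hq2]
    rw [hcell1, hcell2]
    exact cell_id (biclusterObs Ω A B rc.1 rc.2) (fun q => X q.1 q.2)
      (Z (q0 rc).1 (q0 rc).2) (hne rc.1 rc.2)
  refine ⟨t1, t2, ?_, ?_⟩
  · intro Z h1 h2
    rw [loss_eq Z (feas Z h1 h2)]
    have : 0 ≤ (1/2) * ∑ rc : Fin R × Fin C, ((biclusterObs Ω A B rc.1 rc.2).card : ℝ)
        * (Z (q0 rc).1 (q0 rc).2 - μ rc.1 rc.2)^2 := by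
      refine mul_nonneg (by norm_num) (Finset.sum_nonneg fun rc _ =>
        mul_nonneg (le_of_lt (hcard rc.1 rc.2)) (sq_nonneg _))
    linarith
  · intro Z h1 h2 hle
    have hfeas := feas Z h1 h2
    have hdecomp := loss_eq Z hfeas
    have hT : ∑ rc : Fin R × Fin C, ((biclusterObs Ω A B rc.1 rc.2).card : ℝ)
        * (Z (q0 rc).1 (q0 rc).2 - μ rc.1 rc.2)^2 = 0 := by
      have hnn : 0 ≤ ∑ rc : Fin R × Fin C, ((biclusterObs Ω A B rc.1 rc.2).card : ℝ)
          * (Z (q0 rc).1 (q0 rc).2 - μ rc.1 rc.2)^2 :=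
        Finset.sum_nonneg fun rc _ =>
          mul_nonneg (le_of_lt (hcard rc.1 rc.2)) (sq_nonneg _)
      nlinarith [hdecomp, hle]
    have hzero : ∀ rc : Fin R × Fin C, Z (q0 rc).1 (q0 rc).2 = μ rc.1 rc.2 := by
      intro rc
      have := (Finset.sum_eq_zero_iff_of_nonneg (fun rc _ =>
        mul_nonneg (le_of_lt (hcard rc.1 rc.2)) (sq_nonneg
          (Z (q0 rc).1 (q0 rc).2 - μ rc.1 rc.2)))).mp hT rc (Finset.mem_univ rc)
      rcases mul_eq_zero.mp this with h | h
      · exact absurd h (ne_of_gt (hcard rc.1 rc.2))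
      · have := pow_eq_zero_iff (n := 2) (by norm_num) |>.mp h
        linarith
    ext i j
    have : Z i j = Z (q0 (rOf i, cOf j)).1 (q0 (rOf i, cOf j)).2 :=
      hfeas i (q0 (rOf i, cOf j)).1 j (q0 (rOf i, cOf j)).2
        (hq0r (rOf i, cOf j)).symm (hq0c (rOf i, cOf j)).symm
    rw [this, hzero (rOf i, cOf j), hZs]
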